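/- The relations g₀ ∘ g₁^p ∘ g₀ = g₀ hold for all p ≥ 0, and g₀ ∘ g₁^p = g₀ ∘ g₁ hold for all p ≥ 1, as equalities of self-maps of ℕ → ℕ; moreover, the maps g₁^p, g₁^p ∘ g₀, and g₁^p ∘ g₀ ∘ g₁ (over all p ∈ ℕ) are pairwise distinct. Hence the monoid generated by g₀ and g₁ has the presentation Mon⟨ f₀, f₁ | f₀ f₁^p f₀ = f₀ (p ≥ 0), f₀ f₁^p = f₀ f₁ (p ≥ 1) ⟩. -/

import Mathlib

/- The automaton transformation `g₀` of the limit automaton `I′` acting on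
infinite words over a countably infinite alphabet, `u : ℕ → ℕ`: if `u` is
identically `0` it returns the constant sequence `1`; otherwise, with `j` the
least index where `u j ≠ 0`, positions `≤ j` become `1` and the rest are kept. -/
open Classical in
noncomputable def g0 (u : ℕ → ℕ) : ℕ → ℕ :=
  if h : ∃ j, u j ≠ 0 then
    fun i => if i ≤ Nat.find h then 1 else u i
  else fun _ => 1

/- The automaton transformation `g₁` of the limit automaton `I′`: if `u` is
identically `0` it returns the constant sequence `1`; otherwise, with `j` the
least index where `u j ≠ 0`, positions `< j` become `1`, position `j` is
incremented, and the rest are kept. -/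
open Classical in
noncomputable def g1 (u : ℕ → ℕ) : ℕ → ℕ :=
  if h : ∃ j, u j ≠ 0 then
    fun i => if i < Nat.find h then 1 else if i = Nat.find h then u i + 1 else u i
  else fun _ => 1

/-- The relations `g₀ g₁^p g₀ = g₀` (`p ≥ 0`) and `g₀ g₁^p = g₀ g₁` (`p ≥ 1`)
hold, the maps `g₁^p`, `g₁^p ∘ g₀`, `g₁^p ∘ g₀ ∘ g₁` are pairwise distinct, and
every composition of maps from `{g₀, g₁}` equals one of them: the monoid
generated by `g₀`, `g₁` has the presentation
`Mon⟨ f₀, f₁ | f₀ f₁^p f₀ = f₀ (p ≥ 0), f₀ f₁^p = f₀ f₁ (p ≥ 1) ⟩`. -/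
lemma g0_zero (u : ℕ → ℕ) : g0 u 0 = 1 := by
  unfold g0
  split
  · simp
  · rfl

lemma g1_zero_pos (u : ℕ → ℕ) : g1 u 0 ≠ 0 := by
  unfold g1
  split
  · rename_i h
    rcases Nat.eq_zero_or_pos (Nat.find h) with h0 | h0
    · simp [h0]
    · simp [h0]
  · simp

lemma g0_eq (v : ℕ → ℕ) (hv : v 0 ≠ 0) :
    g0 v = fun i => if i = 0 then 1 else v i := by
  have h : ∃ j, v j ≠ 0 := ⟨0, hv⟩
  have hf : Nat.find h = 0 := (Nat.find_eq_zero h).mpr hv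
  unfold g0
  rw [dif_pos h]
  funext i
  simp [hf, Nat.le_zero]

lemma g1_eq (v : ℕ → ℕ) (hv : v 0 ≠ 0) :
    g1 v = fun i => if i = 0 then v 0 + 1 else v i := by
  have h : ∃ j, v j ≠ 0 := ⟨0, hv⟩
  have hf : Nat.find h = 0 := (Nat.find_eq_zero h).mpr hv
  unfold g1
  rw [dif_pos h]
  funext i
  by_cases hi : i = 0 <;> simp [hf, hi]

lemma g1_iter_eq (p : ℕ) (v : ℕ → ℕ) (hv : v 0 ≠ 0) :
    g1^[p] v = fun i => if i = 0 then v 0 + p else v i := by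
  induction p with
  | zero => funext i; by_cases hi : i = 0 <;> simp [hi]
  | succ p ih =>
    rw [Function.iterate_succ_apply', ih]
    have hw : (fun i => if i = 0 then v 0 + p else v i) 0 ≠ 0 := by simp; omega
    rw [g1_eq _ hw]
    funext i
    by_cases hi : i = 0 <;> simp [hi] <;> omega

lemma R1' (p : ℕ) (u : ℕ → ℕ) : g0 (g1^[p] (g0 u)) = g0 u := by
  have h0 : g0 u 0 ≠ 0 := by rw [g0_zero]; exact one_ne_zero
  rw [g1_iter_eq p _ h0]
  have hw : (fun i => if i = 0 then g0 u 0 + p else g0 u i) 0 ≠ 0 := by simp; omega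
  rw [g0_eq _ hw]
  funext i
  by_cases hi : i = 0
  · simp [hi, g0_zero]
  · simp [hi, g0_eq _ h0]

lemma R2' (p : ℕ) (hp : 1 ≤ p) (u : ℕ → ℕ) : g0 (g1^[p] u) = g0 (g1 u) := by
  obtain ⟨k, rfl⟩ : ∃ k, p = k + 1 := ⟨p - 1, by omega⟩
  rw [Function.iterate_succ_apply]
  have h0 : g1 u 0 ≠ 0 := g1_zero_pos u
  rw [g1_iter_eq k _ h0]
  have hw : (fun i => if i = 0 then g1 u 0 + k else g1 u i) 0 ≠ 0 := by simp; omega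
  rw [g0_eq _ hw, g0_eq _ h0]
  funext i
  by_cases hi : i = 0 <;> simp [hi]

lemma R1 (p : ℕ) : g0 ∘ g1^[p] ∘ g0 = g0 := by
  funext u; exact R1' p u

lemma R2 (p : ℕ) (hp : 1 ≤ p) : g0 ∘ g1^[p] = g0 ∘ g1 := by
  funext u; exact R2' p hp u

lemma eval_e (p : ℕ) : g1^[p] (fun _ => 1) 0 = 1 + p := by
  rw [g1_iter_eq p _ (by simp)]; simp

lemma g0_e : g0 (fun _ => 1) = (fun _ => 1) := by
  rw [g0_eq _ (by simp)]
  funext i; by_cases hi : i = 0 <;> simp [hi]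

lemma d2 : (fun i => if i = 0 then 2 else 1 : ℕ → ℕ) 0 ≠ 0 := by simp

lemma eval_d (p : ℕ) : g1^[p] (fun i => if i = 0 then 2 else 1) 0 = 2 + p := by
  rw [g1_iter_eq p _ d2]; simp

lemma g0_d : g0 (fun i => if i = 0 then 2 else 1) = (fun _ => 1) := by
  rw [g0_eq _ d2]
  funext i; by_cases hi : i = 0 <;> simp [hi]

lemma g0_g1 (v : ℕ → ℕ) (hv : v 0 ≠ 0) : g0 (g1 v) = g0 v := by
  rw [g1_eq v hv]
  have hw : (fun i => if i = 0 then v 0 + 1 else v i) 0 ≠ 0 := by simp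
  rw [g0_eq _ hw, g0_eq _ hv]
  funext i; by_cases hi : i = 0 <;> simp [hi]

theorem limit_monoid_presentation_aux :
    (∀ p : ℕ, g0 ∘ g1^[p] ∘ g0 = g0) ∧
    (∀ p : ℕ, 1 ≤ p → g0 ∘ g1^[p] = g0 ∘ g1) ∧
    (∀ p q : ℕ, g1^[p] = g1^[q] → p = q) ∧
    (∀ p q : ℕ, g1^[p] ∘ g0 = g1^[q] ∘ g0 → p = q) ∧
    (∀ p q : ℕ, g1^[p] ∘ g0 ∘ g1 = g1^[q] ∘ g0 ∘ g1 → p = q) ∧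
    (∀ p q : ℕ, g1^[p] ≠ g1^[q] ∘ g0) ∧
    (∀ p q : ℕ, g1^[p] ≠ g1^[q] ∘ g0 ∘ g1) ∧
    (∀ p q : ℕ, g1^[p] ∘ g0 ≠ g1^[q] ∘ g0 ∘ g1) ∧
    (∀ L : List ((ℕ → ℕ) → ℕ → ℕ), (∀ g ∈ L, g = g0 ∨ g = g1) →
      ∃ p : ℕ, L.foldr (· ∘ ·) id = g1^[p] ∨
        L.foldr (· ∘ ·) id = g1^[p] ∘ g0 ∨
        L.foldr (· ∘ ·) id = g1^[p] ∘ g0 ∘ g1) := by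
  refine ⟨R1, R2, ?_, ?_, ?_, ?_, ?_, ?_, ?_⟩
  · intro p q h
    have := congrFun (congrFun h (fun _ => 1 : ℕ → ℕ)) 0
    rw [eval_e, eval_e] at this; omega
  · intro p q h
    have := congrFun (congrFun h (fun _ => 1 : ℕ → ℕ)) 0
    simp only [Function.comp_apply, g0_e] at this
    rw [eval_e, eval_e] at this; omega
  · intro p q h
    have := congrFun (congrFun h (fun _ => 1 : ℕ → ℕ)) 0
    simp only [Function.comp_apply, g0_g1 (fun _ => 1) (by simp), g0_e] at this
    rw [eval_e, eval_e] at this; omega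
  · intro p q h
    have h1 := congrFun (congrFun h (fun _ => 1 : ℕ → ℕ)) 0
    simp only [Function.comp_apply, g0_e] at h1
    rw [eval_e, eval_e] at h1
    have h2 := congrFun (congrFun h (fun i => if i = 0 then 2 else 1 : ℕ → ℕ)) 0
    simp only [Function.comp_apply, g0_d] at h2
    rw [eval_d, eval_e] at h2
    omega
  · intro p q h
    have h1 := congrFun (congrFun h (fun _ => 1 : ℕ → ℕ)) 0
    simp only [Function.comp_apply, g0_g1 (fun _ => 1) (by simp), g0_e] at h1
    rw [eval_e, eval_e] at h1
    have h2 := congrFun (congrFun h (fun i => if i = 0 then 2 else 1 : ℕ → ℕ)) 0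
    simp only [Function.comp_apply, g0_g1 (fun i => if i = 0 then 2 else 1) d2, g0_d] at h2
    rw [eval_d, eval_e] at h2
    omega
  · -- g1^[p] ∘ g0 ≠ g1^[q] ∘ g0 ∘ g1
    intro p q h
    set u : ℕ → ℕ := fun i => if i = 1 then 1 else 0 with hu
    have hex : ∃ j, u j ≠ 0 := ⟨1, by simp [hu]⟩
    have hf : Nat.find hex = 1 := by
      rw [Nat.find_eq_iff]
      refine ⟨by simp [hu], ?_⟩
      intro m hm
      interval_cases m
      simp [hu]
    have hg0u : g0 u = fun i => if i ≤ 1 then 1 else u i := by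
      unfold g0; rw [dif_pos hex, hf]
    have hg1u : g1 u = fun i =>
        if i < 1 then 1 else if i = 1 then u i + 1 else u i := by
      unfold g1; rw [dif_pos hex, hf]
    have hL := congrFun (congrFun h u) 1
    have hA : g0 u 0 ≠ 0 := by rw [g0_zero]; exact one_ne_zero
    have hB : g1 u 0 ≠ 0 := g1_zero_pos u
    rw [Function.comp_apply, Function.comp_apply, Function.comp_apply,
      g1_iter_eq p _ hA] at hL
    have hC : g0 (g1 u) 0 ≠ 0 := by rw [g0_zero]; exact one_ne_zero
    rw [g1_iter_eq q _ hC] at hL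
    simp only [one_ne_zero, if_false] at hL
    rw [g0_eq _ hB] at hL
    simp [hg0u, hg1u] at hL
    simp [hu] at hL
  · intro L hL
    induction L with
    | nil => exact ⟨0, Or.inl rfl⟩
    | cons g L ih =>
      obtain ⟨p, hp⟩ := ih (fun g hg => hL g (List.mem_cons_of_mem _ hg))
      have hg := hL g List.mem_cons_self
      simp only [List.foldr_cons]
      rcases hg with rfl | rfl
      · rcases hp with h | h | h <;> rw [h]
        · rcases Nat.eq_zero_or_pos p with rfl | hp1
          · exact ⟨0, Or.inr (Or.inl (by funext u; simp))⟩
          · refine ⟨0, Or.inr (Or.inr ?_)⟩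
            funext u
            simp only [Function.comp_apply, Function.iterate_zero, id_eq]
            exact R2' p hp1 u
        · exact ⟨0, Or.inr (Or.inl (by
            funext u
            simp only [Function.comp_apply, Function.iterate_zero, id_eq]
            exact R1' p u))⟩
        · exact ⟨0, Or.inr (Or.inr (by
            funext u
            simp only [Function.comp_apply, Function.iterate_zero, id_eq]
            exact R1' p (g1 u)))⟩
      · refine ⟨p + 1, ?_⟩
        rcases hp with h | h | h <;> rw [h]
        · refine Or.inl ?_
          funext u
          simp only [Function.comp_apply]
          exact (Function.iterate_succ_apply' g1 p u).symm
        · refine Or.inr (Or.inl ?_)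
          funext u
          simp only [Function.comp_apply]
          exact (Function.iterate_succ_apply' g1 p (g0 u)).symm
        · refine Or.inr (Or.inr ?_)
          funext u
          simp only [Function.comp_apply]
          exact (Function.iterate_succ_apply' g1 p (g0 (g1 u))).symm

theorem limit_monoid_presentation :
    (∀ p : ℕ, g0 ∘ g1^[p] ∘ g0 = g0) ∧
    (∀ p : ℕ, 1 ≤ p → g0 ∘ g1^[p] = g0 ∘ g1) ∧
    (∀ p q : ℕ, g1^[p] = g1^[q] → p = q) ∧
    (∀ p q : ℕ, g1^[p] ∘ g0 = g1^[q] ∘ g0 → p = q) ∧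
    (∀ p q : ℕ, g1^[p] ∘ g0 ∘ g1 = g1^[q] ∘ g0 ∘ g1 → p = q) ∧
    (∀ p q : ℕ, g1^[p] ≠ g1^[q] ∘ g0) ∧
    (∀ p q : ℕ, g1^[p] ≠ g1^[q] ∘ g0 ∘ g1) ∧
    (∀ p q : ℕ, g1^[p] ∘ g0 ≠ g1^[q] ∘ g0 ∘ g1) ∧
    (∀ L : List ((ℕ → ℕ) → ℕ → ℕ), (∀ g ∈ L, g = g0 ∨ g = g1) →
      ∃ p : ℕ, L.foldr (· ∘ ·) id = g1^[p] ∨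
        L.foldr (· ∘ ·) id = g1^[p] ∘ g0 ∨
        L.foldr (· ∘ ·) id = g1^[p] ∘ g0 ∘ g1) := by
  exact limit_monoid_presentation_aux
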